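/- Let ω be a convex multifacility location function on B^n and let ω̄ : T^n → ℝ be its L-convex relaxation. For every global minimizer x* of ω̄ over T^n and every y ∈ B, the rounded point (x*)_{→y} ∈ B^n satisfies ω((x*)_{→y}) ≤ 2 · min_{x ∈ B^n} ω(x). -/

import Mathlib

open SimpleGraph

/-- A tree `T` regarded as a bipartite graph with black class `B` and white class `W`,
together with the discrete midpoint operations `bull` (`•`) and `circ` (`∘`) characterized
by: `{u • v, u ∘ v} = {a, b}` where `(a,b)` is the unique pair with
`d(u,v) = d(u,a) + d(a,b) + d(b,v)`, `d(u,a) = d(b,v)`, `d(a,b) ≤ 1`, and `u ∘ v ⪯ u • v`. -/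
structure AltTree (V : Type*) where
  T : SimpleGraph V
  tree : T.IsTree
  B : Set V
  W : Set V
  color_disjoint : Disjoint B W
  color_cover : B ∪ W = Set.univ
  adj_colors : ∀ ⦃u v : V⦄, T.Adj u v → (u ∈ B ∧ v ∈ W) ∨ (u ∈ W ∧ v ∈ B)
  bull : V → V → V
  circ : V → V → V
  mid_spec : ∀ u v : V,
      (T.dist u v = T.dist u (bull u v) + T.dist (bull u v) (circ u v) + T.dist (circ u v) v
        ∧ T.dist u (bull u v) = T.dist (circ u v) v)
    ∨ (T.dist u v = T.dist u (circ u v) + T.dist (circ u v) (bull u v) + T.dist (bull u v) v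
        ∧ T.dist u (circ u v) = T.dist (bull u v) v)
  mid_close : ∀ u v : V, T.dist (bull u v) (circ u v) ≤ 1
  circ_le_bull : ∀ u v : V, circ u v = bull u v ∨
      (T.Adj (circ u v) (bull u v) ∧ circ u v ∈ W ∧ bull u v ∈ B)

namespace AltTree

variable {V : Type*} {n : ℕ}

/-- The alternating partial order `u ⪯ v` on the vertices of `T`:
`u ⪯ v` iff `u = v` or `u` and `v` are adjacent with `u` white and `v` black. -/
def le (A : AltTree V) (u v : V) : Prop :=
  u = v ∨ (A.T.Adj u v ∧ u ∈ A.W ∧ v ∈ A.B)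

/-- The componentwise partial order on `T^n`.  `A.leP y x` means `y ∈ I(x)`,
and `A.leP x y` means `y ∈ F(x)`. -/
def leP (A : AltTree V) (x y : Fin n → V) : Prop := ∀ i, A.le (x i) (y i)

/-- The `l∞`-metric on `T^n`. -/
noncomputable def distP (A : AltTree V) (x y : Fin n → V) : ℕ :=
  Finset.univ.sup fun i => A.T.dist (x i) (y i)

/-- Componentwise `•` on `T^n`. -/
def bullP (A : AltTree V) (x y : Fin n → V) : Fin n → V := fun i => A.bull (x i) (y i)

/-- Componentwise `∘` on `T^n`. -/
def circP (A : AltTree V) (x y : Fin n → V) : Fin n → V := fun i => A.circ (x i) (y i)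

/-- Alternating L-convexity: `g(x) + g(y) ≥ g(x • y) + g(x ∘ y)` for all `x, y ∈ T^n`. -/
def IsLConvex (A : AltTree V) (g : (Fin n → V) → WithTop ℝ) : Prop :=
  ∀ x y : Fin n → V, g (A.bullP x y) + g (A.circP x y) ≤ g x + g y

end AltTree

open Classical in
/-- The even function `h̄` obtained from `h : ℤ → ℝ`:
`h̄(t) = h(t)` for even `t` and `h̄(t) = (h(t−1) + h(t+1))/2` for odd `t`. -/
noncomputable def evenize (h : ℤ → ℝ) (t : ℤ) : ℝ :=
  if Even t then h t else (h (t - 1) + h (t + 1)) / 2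

/-- A convex multifacility location function
`ω(x) = Σ_{i,j} f_{ij}(d(x_i, z_j)) + Σ_{i,j} g_{ij}(d(x_i, x_j))`. -/
noncomputable def mfl {V : Type*} {n m : ℕ} (A : AltTree V)
    (f : Fin n → Fin m → ℤ → ℝ) (g : Fin n → Fin n → ℤ → ℝ) (z : Fin m → V)
    (x : Fin n → V) : ℝ :=
  (∑ i, ∑ j, f i j (A.T.dist (x i) (z j))) + ∑ i, ∑ j, g i j (A.T.dist (x i) (x j))

section TreeAux
variable {V : Type*} (A : AltTree V)

lemma AT.conn : A.T.Connected := A.tree.isConnected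

lemma AT.memW {x : V} : x ∈ A.W ↔ x ∉ A.B := by
  constructor
  · intro hW hB
    exact Set.disjoint_left.mp A.color_disjoint hB hW
  · intro hB
    have hx : x ∈ (Set.univ : Set V) := trivial
    rw [← A.color_cover] at hx
    rcases hx with h | h
    · exact absurd h hB
    · exact h

lemma AT.walkParity : ∀ {a b : V} (p : A.T.Walk a b), Even p.length ↔ (a ∈ A.B ↔ b ∈ A.B) := by
  intro a b p
  induction p with
  | nil => simp
  | @cons a c b h p ih =>
    have hc := A.adj_colors h
    have hW1 := AT.memW A (x := a)
    have hW2 := AT.memW A (x := c)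
    rw [SimpleGraph.Walk.length_cons, Nat.even_add_one, ih]
    tauto

lemma AT.distParity (a b : V) : Even (A.T.dist a b) ↔ (a ∈ A.B ↔ b ∈ A.B) := by
  obtain ⟨p, hp⟩ := (AT.conn A).exists_walk_length_eq_dist a b
  rw [← hp]; exact AT.walkParity A p

lemma AT.pathLen {a b : V} (p : A.T.Walk a b) (hp : p.IsPath) : p.length = A.T.dist a b := by
  obtain ⟨q, hq, hql⟩ := (AT.conn A).exists_path_of_dist a b
  rw [(A.tree.existsUnique_path a b).unique hp hq, hql]

lemma AT.splitLen {a b w : V} (p : A.T.Walk a b) (h : w ∈ p.support) :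
    A.T.dist a w + A.T.dist w b ≤ p.length := by
  classical
  have hlen := congrArg SimpleGraph.Walk.length (p.take_spec h)
  rw [SimpleGraph.Walk.length_append] at hlen
  calc A.T.dist a w + A.T.dist w b ≤ (p.takeUntil w h).length + (p.dropUntil w h).length :=
        add_le_add (SimpleGraph.dist_le _) (SimpleGraph.dist_le _)
    _ = p.length := hlen

lemma AT.parentUnique {a a' a'' y : V} (h1 : A.T.Adj a a') (h2 : A.T.Adj a a'')
    (hd1 : A.T.dist a y = A.T.dist a' y + 1) (hd2 : A.T.dist a y = A.T.dist a'' y + 1) :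
    a' = a'' := by
  obtain ⟨Q1, hQ1, hl1⟩ := (AT.conn A).exists_path_of_dist a' y
  obtain ⟨Q2, hQ2, hl2⟩ := (AT.conn A).exists_path_of_dist a'' y
  have hn1 : a ∉ Q1.support := by
    intro hmem
    have := AT.splitLen A Q1 hmem
    rw [hl1] at this; omega
  have hn2 : a ∉ Q2.support := by
    intro hmem
    have := AT.splitLen A Q2 hmem
    rw [hl2] at this; omega
  have hp1 : (Q1.cons h1).IsPath := hQ1.cons hn1
  have hp2 : (Q2.cons h2).IsPath := hQ2.cons hn2
  have heq := (A.tree.existsUnique_path a y).unique hp1 hp2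
  have := congrArg (fun w => SimpleGraph.Walk.getVert w 1) heq
  simpa [SimpleGraph.Walk.getVert_cons] using this

lemma AT.push {a a' b y : V} (hadj : A.T.Adj a a')
    (hy : A.T.dist a y = A.T.dist a' y + 1)
    (hb : A.T.dist a' b = A.T.dist a b + 1) :
    A.T.dist b y = A.T.dist a b + A.T.dist a y := by
  obtain ⟨P, hP, hlP⟩ := (AT.conn A).exists_path_of_dist b a
  obtain ⟨Q, hQ, hlQ⟩ := (AT.conn A).exists_path_of_dist a' y
  have hnaQ : a ∉ Q.support := by
    intro hmem
    have := AT.splitLen A Q hmem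
    rw [hlQ] at this; omega
  have hdisj : ∀ v, v ∈ P.support → v ∉ Q.support := by
    intro v hvP hvQ
    have hs1 := AT.splitLen A P hvP
    have hs2 := AT.splitLen A Q hvQ
    rw [hlP] at hs1; rw [hlQ] at hs2
    have t1 : A.T.dist a' b ≤ A.T.dist a' v + A.T.dist v b := (AT.conn A).dist_triangle
    have t2 : A.T.dist a y ≤ A.T.dist a v + A.T.dist v y := (AT.conn A).dist_triangle
    have e1 : A.T.dist b v = A.T.dist v b := SimpleGraph.dist_comm
    have e2 : A.T.dist v a = A.T.dist a v := SimpleGraph.dist_comm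
    have e3 : A.T.dist b a = A.T.dist a b := SimpleGraph.dist_comm
    omega
  have hRpath : (P.append (Q.cons hadj)).IsPath := by
    rw [SimpleGraph.Walk.isPath_def, SimpleGraph.Walk.support_append]
    rw [List.nodup_append]
    refine ⟨hP.support_nodup, ?_, ?_⟩
    · rw [SimpleGraph.Walk.support_cons]
      exact hQ.support_nodup
    · intro v hvP w hvT hvw
      rw [SimpleGraph.Walk.support_cons] at hvT
      simp only [List.tail_cons] at hvT
      exact hdisj v hvP (hvw ▸ hvT)
  have hlen := AT.pathLen A _ hRpath
  rw [SimpleGraph.Walk.length_append, SimpleGraph.Walk.length_cons, hlP, hlQ] at hlen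
  have e3 : A.T.dist b a = A.T.dist a b := SimpleGraph.dist_comm
  omega

lemma AT.nonexp {a b a' b' y : V} (haW : a ∈ A.W) (hbW : b ∈ A.W)
    (hadja : A.T.Adj a a') (hya : A.T.dist a y = A.T.dist a' y + 1)
    (hadjb : A.T.Adj b b') (hyb : A.T.dist b y = A.T.dist b' y + 1) :
    A.T.dist a' b' ≤ A.T.dist a b := by
  have haB : a ∉ A.B := (AT.memW A).mp haW
  have hbB : b ∉ A.B := (AT.memW A).mp hbW
  have ha'B : a' ∈ A.B := by
    rcases A.adj_colors hadja with ⟨h, _⟩ | ⟨_, h⟩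
    · exact absurd h haB
    · exact h
  have hb'B : b' ∈ A.B := by
    rcases A.adj_colors hadjb with ⟨h, _⟩ | ⟨_, h⟩
    · exact absurd h hbB
    · exact h
  have hD : Even (A.T.dist a b) := (AT.distParity A a b).mpr (iff_of_false haB hbB)
  have hD' : Even (A.T.dist a' b') := (AT.distParity A a' b').mpr (iff_of_true ha'B hb'B)
  have d1 : A.T.dist a' a = 1 := SimpleGraph.dist_eq_one_iff_adj.mpr hadja.symm
  have d2 : A.T.dist b b' = 1 := SimpleGraph.dist_eq_one_iff_adj.mpr hadjb
  have d2' : A.T.dist b' b = 1 := SimpleGraph.dist_eq_one_iff_adj.mpr hadjb.symm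
  have t1 : A.T.dist a' b' ≤ A.T.dist a' a + A.T.dist a b' := (AT.conn A).dist_triangle
  have t2 : A.T.dist a b' ≤ A.T.dist a b + A.T.dist b b' := (AT.conn A).dist_triangle
  have t3 : A.T.dist a' b ≤ A.T.dist a' a + A.T.dist a b := (AT.conn A).dist_triangle
  have t4 : A.T.dist a' b' ≤ A.T.dist a' b + A.T.dist b b' := (AT.conn A).dist_triangle
  by_contra hlt
  have hlt' : A.T.dist a b < A.T.dist a' b' := Nat.lt_of_not_le hlt
  rw [Nat.even_iff] at hD hD'
  have hd2 : A.T.dist a' b' = A.T.dist a b + 2 := by omega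
  have hba : A.T.dist a' b = A.T.dist a b + 1 := by omega
  have hab' : A.T.dist a b' = A.T.dist a b + 1 := by omega
  have P1 := AT.push A hadja hya hba
  have eb'a : A.T.dist b' a = A.T.dist a b' := SimpleGraph.dist_comm
  have eba : A.T.dist b a = A.T.dist a b := SimpleGraph.dist_comm
  have P2 := AT.push A hadjb hyb (by omega : A.T.dist b' a = A.T.dist b a + 1)
  have hD0 : A.T.dist a b = 0 := by omega
  have hab : a = b := ((AT.conn A).dist_eq_zero_iff).mp hD0
  subst hab
  have heq : a' = b' := AT.parentUnique A hadja hadjb hya hyb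
  subst heq
  have : A.T.dist a' a' = 0 := SimpleGraph.dist_self
  omega

end TreeAux

private lemma stepMono {h : ℤ → ℝ} (hs : ∀ t, h (t - 1) ≤ h t) : Monotone h := by
  have key : ∀ (k : ℕ) (s : ℤ), h s ≤ h (s + k) := by
    intro k
    induction k with
    | zero => simp
    | succ k ih =>
      intro s
      have hstep := hs (s + k + 1)
      have h2 : (s + (k : ℤ) + 1) - 1 = s + k := by ring
      rw [h2] at hstep
      have h3 : (s + ((k : ℕ) + 1 : ℕ) : ℤ) = s + (k : ℤ) + 1 := by push_cast; ring
      rw [h3]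
      exact (ih s).trans hstep
  intro s t hst
  obtain ⟨k, hk⟩ := Int.le.dest hst
  rw [← hk]
  exact key k s

private lemma evenize_even {h : ℤ → ℝ} {t : ℤ} (ht : Even t) : evenize h t = h t := by
  simp [evenize, ht]

private lemma two_mul_evenize_odd {h : ℤ → ℝ} {t : ℤ} (ht : ¬ Even t) :
    2 * evenize h t = h (t - 1) + h (t + 1) := by
  simp only [evenize, if_neg ht]
  ring

/-- Theorem 2.15 (2), 2-approximation by rounding.  Let `ω` be a
convex multifacility location function on `B^n` (all `f_{ij}`, `g_{ij}` nonnegative,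
nondecreasing and convex, all `z_j` black) and `ω̄` its L-convex relaxation on `T^n`
(obtained by replacing each `f_{ij}`, `g_{ij}` by its even modification).  For every
global minimizer `x*` of `ω̄` over `T^n` and every `y ∈ B`, the rounded point
`(x*)_{→y} ∈ B^n` satisfies `ω((x*)_{→y}) ≤ 2 · min_{x ∈ B^n} ω(x)`. -/
theorem stmt8 {V : Type*} (A : AltTree V) {n m : ℕ}
    (f : Fin n → Fin m → ℤ → ℝ) (g : Fin n → Fin n → ℤ → ℝ)
    (hf_nonneg : ∀ i j t, 0 ≤ f i j t) (hg_nonneg : ∀ i j t, 0 ≤ g i j t)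
    (hf_mono : ∀ i j t, f i j (t - 1) ≤ f i j t)
    (hg_mono : ∀ i j t, g i j (t - 1) ≤ g i j t)
    (hf_conv : ∀ i j t, 0 ≤ f i j (t + 1) - 2 * f i j t + f i j (t - 1))
    (hg_conv : ∀ i j t, 0 ≤ g i j (t + 1) - 2 * g i j t + g i j (t - 1))
    (z : Fin m → V) (hz : ∀ j, z j ∈ A.B)
    (xstar : Fin n → V)
    (hmin : ∀ q : Fin n → V,
      mfl A (fun i j => evenize (f i j)) (fun i j => evenize (g i j)) z xstar ≤
      mfl A (fun i j => evenize (f i j)) (fun i j => evenize (g i j)) z q)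
    (y : V) (hy : y ∈ A.B)
    (u : Fin n → V)
    (hround : ∀ i, (xstar i ∈ A.B → u i = xstar i) ∧
      (xstar i ∈ A.W → A.T.Adj (xstar i) (u i) ∧
        A.T.dist (xstar i) y = 1 + A.T.dist (u i) y)) :
    ∀ q : Fin n → V, (∀ i, q i ∈ A.B) → mfl A f g z u ≤ 2 * mfl A f g z q := by
  intro q hq
  have key_f : ∀ i j, f i j ((A.T.dist (u i) (z j) : ℤ)) ≤
      2 * evenize (f i j) ((A.T.dist (xstar i) (z j) : ℤ)) := by
    intro i j
    by_cases hB : xstar i ∈ A.B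
    · have hu : u i = xstar i := (hround i).1 hB
      have hev : Even ((A.T.dist (xstar i) (z j) : ℤ)) := by
        rw [Int.even_coe_nat]
        exact (AT.distParity A _ _).mpr (iff_of_true hB (hz j))
      rw [hu, evenize_even hev]
      linarith [hf_nonneg i j ((A.T.dist (xstar i) (z j) : ℤ))]
    · have hW : xstar i ∈ A.W := (AT.memW A).mpr hB
      obtain ⟨hadj, -⟩ := (hround i).2 hW
      have hodd : ¬ Even ((A.T.dist (xstar i) (z j) : ℤ)) := by
        rw [Int.even_coe_nat, AT.distParity A]
        intro hiff
        exact hB (hiff.mpr (hz j))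
      rw [two_mul_evenize_odd hodd]
      have hle : A.T.dist (u i) (z j) ≤ A.T.dist (xstar i) (z j) + 1 := by
        have t := (AT.conn A).dist_triangle (u := u i) (v := xstar i) (w := z j)
        have h1 : A.T.dist (u i) (xstar i) = 1 :=
          SimpleGraph.dist_eq_one_iff_adj.mpr hadj.symm
        omega
      have hm : f i j ((A.T.dist (u i) (z j) : ℤ)) ≤
          f i j ((A.T.dist (xstar i) (z j) : ℤ) + 1) :=
        stepMono (hf_mono i j) (by exact_mod_cast hle)
      linarith [hf_nonneg i j ((A.T.dist (xstar i) (z j) : ℤ) - 1)]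
  have key_g : ∀ i j, g i j ((A.T.dist (u i) (u j) : ℤ)) ≤
      2 * evenize (g i j) ((A.T.dist (xstar i) (xstar j) : ℤ)) := by
    intro i j
    by_cases hBi : xstar i ∈ A.B <;> by_cases hBj : xstar j ∈ A.B
    · have hui : u i = xstar i := (hround i).1 hBi
      have huj : u j = xstar j := (hround j).1 hBj
      have hev : Even ((A.T.dist (xstar i) (xstar j) : ℤ)) := by
        rw [Int.even_coe_nat]
        exact (AT.distParity A _ _).mpr (iff_of_true hBi hBj)
      rw [hui, huj, evenize_even hev]
      linarith [hg_nonneg i j ((A.T.dist (xstar i) (xstar j) : ℤ))]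
    · have hui : u i = xstar i := (hround i).1 hBi
      have hWj : xstar j ∈ A.W := (AT.memW A).mpr hBj
      obtain ⟨hadj, -⟩ := (hround j).2 hWj
      have hodd : ¬ Even ((A.T.dist (xstar i) (xstar j) : ℤ)) := by
        rw [Int.even_coe_nat, AT.distParity A]
        intro hiff
        exact hBj (hiff.mp hBi)
      rw [two_mul_evenize_odd hodd]
      have hle : A.T.dist (u i) (u j) ≤ A.T.dist (xstar i) (xstar j) + 1 := by
        have t := (AT.conn A).dist_triangle (u := u i) (v := xstar j) (w := u j)
        have h1 : A.T.dist (xstar j) (u j) = 1 := SimpleGraph.dist_eq_one_iff_adj.mpr hadj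
        rw [hui] at *
        omega
      have hm : g i j ((A.T.dist (u i) (u j) : ℤ)) ≤
          g i j ((A.T.dist (xstar i) (xstar j) : ℤ) + 1) :=
        stepMono (hg_mono i j) (by exact_mod_cast hle)
      linarith [hg_nonneg i j ((A.T.dist (xstar i) (xstar j) : ℤ) - 1)]
    · have huj : u j = xstar j := (hround j).1 hBj
      have hWi : xstar i ∈ A.W := (AT.memW A).mpr hBi
      obtain ⟨hadj, -⟩ := (hround i).2 hWi
      have hodd : ¬ Even ((A.T.dist (xstar i) (xstar j) : ℤ)) := by
        rw [Int.even_coe_nat, AT.distParity A]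
        intro hiff
        exact hBi (hiff.mpr hBj)
      rw [two_mul_evenize_odd hodd]
      have hle : A.T.dist (u i) (u j) ≤ A.T.dist (xstar i) (xstar j) + 1 := by
        have t := (AT.conn A).dist_triangle (u := u i) (v := xstar i) (w := u j)
        have h1 : A.T.dist (u i) (xstar i) = 1 :=
          SimpleGraph.dist_eq_one_iff_adj.mpr hadj.symm
        rw [huj] at *
        omega
      have hm : g i j ((A.T.dist (u i) (u j) : ℤ)) ≤
          g i j ((A.T.dist (xstar i) (xstar j) : ℤ) + 1) :=
        stepMono (hg_mono i j) (by exact_mod_cast hle)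
      linarith [hg_nonneg i j ((A.T.dist (xstar i) (xstar j) : ℤ) - 1)]
    · have hWi : xstar i ∈ A.W := (AT.memW A).mpr hBi
      have hWj : xstar j ∈ A.W := (AT.memW A).mpr hBj
      obtain ⟨hadji, hdi⟩ := (hround i).2 hWi
      obtain ⟨hadjj, hdj⟩ := (hround j).2 hWj
      have hev : Even ((A.T.dist (xstar i) (xstar j) : ℤ)) := by
        rw [Int.even_coe_nat]
        exact (AT.distParity A _ _).mpr (iff_of_false hBi hBj)
      rw [evenize_even hev]
      have hle : A.T.dist (u i) (u j) ≤ A.T.dist (xstar i) (xstar j) :=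
        AT.nonexp A (y := y) hWi hWj hadji (by omega) hadjj (by omega)
      have hm : g i j ((A.T.dist (u i) (u j) : ℤ)) ≤
          g i j ((A.T.dist (xstar i) (xstar j) : ℤ)) :=
        stepMono (hg_mono i j) (by exact_mod_cast hle)
      linarith [hg_nonneg i j ((A.T.dist (xstar i) (xstar j) : ℤ))]
  have h1 : (∑ i, ∑ j, f i j ((A.T.dist (u i) (z j) : ℤ))) ≤
      ∑ i, ∑ j, 2 * evenize (f i j) ((A.T.dist (xstar i) (z j) : ℤ)) :=
    Finset.sum_le_sum fun i _ => Finset.sum_le_sum fun j _ => key_f i j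
  have h2 : (∑ i, ∑ j, g i j ((A.T.dist (u i) (u j) : ℤ))) ≤
      ∑ i, ∑ j, 2 * evenize (g i j) ((A.T.dist (xstar i) (xstar j) : ℤ)) :=
    Finset.sum_le_sum fun i _ => Finset.sum_le_sum fun j _ => key_g i j
  have hA : mfl A f g z u ≤
      2 * mfl A (fun i j => evenize (f i j)) (fun i j => evenize (g i j)) z xstar := by
    simp only [mfl, mul_add, Finset.mul_sum]
    exact add_le_add h1 h2
  have hC : mfl A (fun i j => evenize (f i j)) (fun i j => evenize (g i j)) z q
      = mfl A f g z q := by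
    simp only [mfl]
    congr 1
    · refine Finset.sum_congr rfl fun i _ => Finset.sum_congr rfl fun j _ => ?_
      refine evenize_even ?_
      rw [Int.even_coe_nat]
      exact (AT.distParity A _ _).mpr (iff_of_true (hq i) (hz j))
    · refine Finset.sum_congr rfl fun i _ => Finset.sum_congr rfl fun j _ => ?_
      refine evenize_even ?_
      rw [Int.even_coe_nat]
      exact (AT.distParity A _ _).mpr (iff_of_true (hq i) (hq j))
  have hmin' := hmin q
  linarith
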